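/- For the 4-vertex unit-weight graph G with vertices {a,b,c,d}, edges {ab, ac, bc, bd, cd}, and capacities c_a = c_b = c_c = 2, c_d = 1, the allocation y = (y_a, y_b, y_c, y_d) = (1,1,1,0) lies in the core of the capacitated cooperative matching game: Σ_{v∈V} y_v = ν^c(G) and Σ_{v∈S} y_v ≥ ν^c(G[S]) for every S ⊆ V. Hence there exists an unstable capacitated graph whose cooperative matching game has a nonempty core. -/

import Mathlib

variable {V : Type*}

/-- Degree of a vertex with respect to an edge set. -/
def degOn [DecidableEq V] (M : Finset (Sym2 V)) (v : V) : ℕ :=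
  (M.filter (fun e => v ∈ e)).card

/-- Total weight of an edge set. -/
def wsum (w : Sym2 V → ℝ) (M : Finset (Sym2 V)) : ℝ := ∑ e ∈ M, w e

/-- A `c`-matching: a set of edges of `G` with every vertex degree at most its capacity. -/
def IsCMatching [DecidableEq V] (G : SimpleGraph V) (c : V → ℕ) (M : Finset (Sym2 V)) : Prop :=
  (∀ e ∈ M, e ∈ G.edgeSet) ∧ ∀ v, degOn M v ≤ c v

/-- A maximum-weight `c`-matching. -/
def IsMaxCMatching [DecidableEq V] (G : SimpleGraph V) (w : Sym2 V → ℝ) (c : V → ℕ)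
    (M : Finset (Sym2 V)) : Prop :=
  IsCMatching G c M ∧ ∀ N, IsCMatching G c N → wsum w N ≤ wsum w M

/-- A list of edges is `M`-alternating if consecutive edges alternate
between `M` and its complement. -/
def Alternating [DecidableEq V] (M : Finset (Sym2 V)) (l : List (Sym2 V)) : Prop :=
  l.Chain' (fun e f => (e ∈ M ↔ f ∉ M))

/-- Weight (with multiplicity) of the matched edges of a list. -/
def matchedWeight [DecidableEq V] (w : Sym2 V → ℝ) (M : Finset (Sym2 V))
    (l : List (Sym2 V)) : ℝ :=
  ((l.filter (fun e => decide (e ∈ M))).map w).sum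

/-- Weight (with multiplicity) of the unmatched edges of a list. -/
def unmatchedWeight [DecidableEq V] (w : Sym2 V → ℝ) (M : Finset (Sym2 V))
    (l : List (Sym2 V)) : ℝ :=
  ((l.filter (fun e => decide (e ∉ M))).map w).sum

/-- `M`-augmenting: `w(l \ M) > w(l ∩ M)` (multiplicities counted). -/
def Augmenting [DecidableEq V] (w : Sym2 V → ℝ) (M : Finset (Sym2 V)) (l : List (Sym2 V)) : Prop :=
  matchedWeight w M l < unmatchedWeight w M l

/-- Fractional degree `Σ_{e ∈ δ(v)} x_e`. -/
def lpDeg [Fintype V] [DecidableEq V] (x : Sym2 V → ℝ) (v : V) : ℝ :=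
  ∑ e : Sym2 V, if v ∈ e then x e else 0

/-- A fractional `c`-matching. -/
def IsFracCMatching [Fintype V] [DecidableEq V] (G : SimpleGraph V) (c : V → ℕ)
    (x : Sym2 V → ℝ) : Prop :=
  (∀ e, 0 ≤ x e ∧ x e ≤ 1) ∧ (∀ e, e ∉ G.edgeSet → x e = 0) ∧ ∀ v, lpDeg x v ≤ (c v : ℝ)

/-- LP objective value `w^T x`. -/
def lpVal [Fintype V] (w x : Sym2 V → ℝ) : ℝ := ∑ e : Sym2 V, w e * x e

/-- `ν^c(G)`: maximum weight of a `c`-matching. -/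
noncomputable def nuC [Fintype V] [DecidableEq V] (G : SimpleGraph V) (w : Sym2 V → ℝ)
    (c : V → ℕ) : ℝ :=
  sSup {r | ∃ M, IsCMatching G c M ∧ r = wsum w M}

/-- `ν_f^c(G)`: optimum of the fractional `c`-matching LP. -/
noncomputable def nuF [Fintype V] [DecidableEq V] (G : SimpleGraph V) (w : Sym2 V → ℝ)
    (c : V → ℕ) : ℝ :=
  sSup {r | ∃ x, IsFracCMatching G c x ∧ r = lpVal w x}

/-- A capacitated graph is stable if `ν^c(G) = ν_f^c(G)`. -/
def Stable [Fintype V] [DecidableEq V] (G : SimpleGraph V) (w : Sym2 V → ℝ) (c : V → ℕ) : Prop :=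
  nuC G w c = nuF G w c

/-- The ε-augmentation `x^{M/W}(ε)` of a walk. -/
def epsAug [DecidableEq V] {G : SimpleGraph V} {u v : V} (M : Finset (Sym2 V))
    (p : G.Walk u v) (ε : ℝ) : Sym2 V → ℝ :=
  fun e => if e ∈ M then 1 - (p.edges.count e : ℝ) * ε else (p.edges.count e : ℝ) * ε

/-- Symmetric difference of edge sets. -/
def symmDiffE [DecidableEq V] (M T : Finset (Sym2 V)) : Finset (Sym2 V) := (M \ T) ∪ (T \ M)

/-- The 4-vertex graph on `{a,b,c,d} = {0,1,2,3}` with all edges except `ad`. -/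
def counterG : SimpleGraph (Fin 4) :=
  SimpleGraph.fromRel (fun x y => s(x, y) ≠ s((0 : Fin 4), (3 : Fin 4)))

/-- Capacities `c_a = c_b = c_c = 2`, `c_d = 1`. -/
def counterCaps : Fin 4 → ℕ := ![2, 2, 2, 1]

-- auxiliary lemmas
-- auxiliary lemmas
lemma card_filter_mem_edge [Fintype V] [DecidableEq V] {G : SimpleGraph V} {e : Sym2 V}
    (he : e ∈ G.edgeSet) : (Finset.univ.filter (fun v => v ∈ e)).card = 2 := by
  induction e using Sym2.ind with
  | _ x y =>
    have hxy : x ≠ y := ((SimpleGraph.mem_edgeSet G).mp he).ne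
    have h : Finset.univ.filter (fun v => v ∈ s(x, y)) = {x, y} := by
      ext v; simp [Sym2.mem_iff]
    rw [h, Finset.card_pair hxy]

lemma two_card_le [Fintype V] [DecidableEq V] {G : SimpleGraph V} {c : V → ℕ}
    {M : Finset (Sym2 V)} (h : IsCMatching G c M) : 2 * M.card ≤ ∑ v, c v := by
  have key : ∑ v, degOn M v = 2 * M.card := by
    unfold degOn
    simp_rw [Finset.card_filter]
    rw [Finset.sum_comm]
    have h2 : ∀ e ∈ M, (∑ v : V, if v ∈ e then 1 else 0) = 2 := by
      intro e he
      rw [← Finset.card_filter]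
      exact card_filter_mem_edge (h.1 e he)
    rw [Finset.sum_congr rfl h2, Finset.sum_const, smul_eq_mul, mul_comm]
  calc 2 * M.card = ∑ v, degOn M v := key.symm
    _ ≤ ∑ v, c v := Finset.sum_le_sum (fun v _ => h.2 v)

lemma empty_mem [Fintype V] [DecidableEq V] (G : SimpleGraph V) (c : V → ℕ) :
    (0 : ℝ) ∈ {r | ∃ M, IsCMatching G c M ∧ r = wsum (fun _ => (1:ℝ)) M} :=
  ⟨∅, ⟨fun e he => absurd he (Finset.notMem_empty e), fun v => Nat.zero_le _⟩,
    by simp [wsum]⟩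

lemma nuC_le [Fintype V] [DecidableEq V] (G : SimpleGraph V) (c : V → ℕ) {b : ℝ}
    (hb : (((∑ v, c v) / 2 : ℕ) : ℝ) ≤ b) : nuC G (fun _ => 1) c ≤ b := by
  apply csSup_le ⟨0, empty_mem G c⟩
  rintro r ⟨M, hM, rfl⟩
  have h1 : wsum (fun _ => (1:ℝ)) M = (M.card : ℝ) := by simp [wsum]
  have h2 : M.card ≤ (∑ v, c v) / 2 :=
    Nat.le_div_iff_mul_le (by norm_num) |>.mpr (by have := two_card_le hM; omega)
  rw [h1]
  exact le_trans (by exact_mod_cast h2) hb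

lemma nuC_bddAbove [Fintype V] [DecidableEq V] (G : SimpleGraph V) (c : V → ℕ) :
    BddAbove {r | ∃ M, IsCMatching G c M ∧ r = wsum (fun _ => (1:ℝ)) M} := by
  refine ⟨(((∑ v, c v) / 2 : ℕ) : ℝ), ?_⟩
  rintro r ⟨M, hM, rfl⟩
  have h1 : wsum (fun _ => (1:ℝ)) M = (M.card : ℝ) := by simp [wsum]
  have h2 : M.card ≤ (∑ v, c v) / 2 :=
    Nat.le_div_iff_mul_le (by norm_num) |>.mpr (by have := two_card_le hM; omega)
  rw [h1]; exact_mod_cast h2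
lemma counterG_adj {x y : Fin 4} (h : x ≠ y) (h2 : s(x,y) ≠ s((0:Fin 4),(3:Fin 4))) :
    counterG.Adj x y := by
  rw [counterG, SimpleGraph.fromRel_adj]
  exact ⟨h, Or.inl h2⟩

def M₀ : Finset (Sym2 (Fin 4)) := {s(0,1), s(1,2), s(2,3)}

lemma M₀_matching : IsCMatching counterG counterCaps M₀ := by
  constructor
  · intro e he
    fin_cases he <;>
      · rw [SimpleGraph.mem_edgeSet]; exact counterG_adj (by decide) (by decide)
  · decide

lemma nuC_counter : nuC counterG (fun _ => 1) counterCaps = 3 := by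
  apply le_antisymm
  · apply nuC_le
    norm_num [counterCaps, Fin.sum_univ_four, Matrix.cons_val_two, Matrix.cons_val_three]
  · apply le_csSup (nuC_bddAbove _ _)
    refine ⟨M₀, M₀_matching, ?_⟩
    rw [show wsum (fun _ => (1:ℝ)) M₀ = ((M₀.card : ℕ) : ℝ) from by simp [wsum],
        show M₀.card = 3 from by decide]
    norm_num

/-- Doubled fractional matching values (ℕ-valued so `decide` works). -/
def n₀ : Sym2 (Fin 4) → ℕ := fun e =>
  if e = s(0,1) ∨ e = s(0,2) then 2
  else if e = s(1,2) ∨ e = s(1,3) ∨ e = s(2,3) then 1 else 0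

noncomputable def x₀ : Sym2 (Fin 4) → ℝ := fun e => (n₀ e : ℝ) / 2

lemma x₀_frac : IsFracCMatching counterG counterCaps x₀ := by
  refine ⟨?_, ?_, ?_⟩
  · intro e
    have h : n₀ e ≤ 2 := by revert e; decide
    unfold x₀
    constructor
    · positivity
    · rw [div_le_one (by norm_num : (0:ℝ) < 2)]
      exact_mod_cast h
  · intro e he
    unfold x₀ n₀
    split_ifs with h1 h2
    · exfalso; apply he
      rcases h1 with rfl | rfl <;>
        · rw [SimpleGraph.mem_edgeSet]; exact counterG_adj (by decide) (by decide)
    · exfalso; apply he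
      rcases h2 with rfl | rfl | rfl <;>
        · rw [SimpleGraph.mem_edgeSet]; exact counterG_adj (by decide) (by decide)
    · norm_num
  · intro v
    have key : ∀ v : Fin 4, (∑ e : Sym2 (Fin 4), if v ∈ e then n₀ e else 0)
        ≤ 2 * counterCaps v := by decide
    have hcast : lpDeg x₀ v
        = ((∑ e : Sym2 (Fin 4), if v ∈ e then n₀ e else 0 : ℕ) : ℝ) / 2 := by
      unfold lpDeg x₀
      rw [Nat.cast_sum, Finset.sum_div]
      apply Finset.sum_congr rfl
      intro e _
      split_ifs <;> simp
    rw [hcast, div_le_iff₀ (by norm_num : (0:ℝ) < 2)]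
    have h2 : ((∑ e : Sym2 (Fin 4), if v ∈ e then n₀ e else 0 : ℕ) : ℝ)
        ≤ ((2 * counterCaps v : ℕ) : ℝ) := Nat.cast_le.mpr (key v)
    refine h2.trans (le_of_eq ?_)
    push_cast
    ring

lemma lpVal_x₀ : lpVal (fun _ => 1) x₀ = 7/2 := by
  have key : (∑ e : Sym2 (Fin 4), n₀ e) = 7 := by decide
  have hcast : lpVal (fun _ => (1:ℝ)) x₀ = ((∑ e : Sym2 (Fin 4), n₀ e : ℕ) : ℝ) / 2 := by
    unfold lpVal x₀
    rw [Nat.cast_sum, Finset.sum_div]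
    apply Finset.sum_congr rfl
    intro e _
    ring
  rw [hcast, key]
  norm_num

lemma nuF_ge : (7/2 : ℝ) ≤ nuF counterG (fun _ => 1) counterCaps := by
  apply le_csSup
  · refine ⟨10, ?_⟩
    rintro r ⟨x, hx, rfl⟩
    have h : lpVal (fun _ => (1:ℝ)) x ≤ ∑ _e : Sym2 (Fin 4), (1:ℝ) := by
      apply Finset.sum_le_sum
      intro e _
      simpa using (hx.1 e).2
    apply h.trans
    rw [Finset.sum_const, show (Finset.univ : Finset (Sym2 (Fin 4))).card = 10 from by decide]
    norm_num
  · exact ⟨x₀, x₀_frac, lpVal_x₀.symm⟩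

/-- for the unstable capacitated graph of Statement 10 with unit weights,
the allocation `y = (1,1,1,0)` is in the core of the capacitated cooperative matching game:
it is nonnegative, distributes exactly `ν^c(G)`, and every coalition `S` receives at least
`ν^c(G[S])`. Hence there is an unstable capacitated graph whose cooperative matching game
has a nonempty core. -/
theorem stmt11 :
    (∀ v, 0 ≤ (![1, 1, 1, 0] : Fin 4 → ℝ) v) ∧
    (∑ v : Fin 4, (![1, 1, 1, 0] : Fin 4 → ℝ) v = nuC counterG (fun _ => 1) counterCaps) ∧
    (∀ S : Finset (Fin 4),
      nuC (counterG.induce (↑S : Set (Fin 4))) (fun _ => 1) (fun v => counterCaps v.1) ≤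
        ∑ v ∈ S, (![1, 1, 1, 0] : Fin 4 → ℝ) v) ∧
    ¬ Stable counterG (fun _ => 1) counterCaps := by
  refine ⟨?_, ?_, ?_, ?_⟩
  · intro v
    fin_cases v <;> norm_num
  · rw [nuC_counter, Fin.sum_univ_four]
    norm_num [Matrix.cons_val_two, Matrix.cons_val_three]
  · intro S
    apply nuC_le
    have h1 : (∑ v : (↑S : Set (Fin 4)), counterCaps v.1) = ∑ v ∈ S, counterCaps v := by
      rw [Finset.sum_set_coe (f := counterCaps) (s := (↑S : Set (Fin 4)))]
      simp
    rw [h1]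
    have key : ∀ T : Finset (Fin 4),
        (∑ v ∈ T, counterCaps v) / 2 ≤ ∑ v ∈ T, (![1, 1, 1, 0] : Fin 4 → ℕ) v := by decide
    have h2 : (∑ v ∈ S, (![1, 1, 1, 0] : Fin 4 → ℝ) v)
        = ((∑ v ∈ S, (![1, 1, 1, 0] : Fin 4 → ℕ) v : ℕ) : ℝ) := by
      rw [Nat.cast_sum]
      apply Finset.sum_congr rfl
      intro v _
      fin_cases v <;> norm_num
    rw [h2]
    exact_mod_cast key S
  · unfold Stable
    rw [nuC_counter]
    intro h
    have hF := nuF_ge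
    rw [← h] at hF
    linarith
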